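/- Let m and n be coprime odd positive integers and let q be any integer. Then G(χ_{mn}, q) = G(χ_m, q)·G(χ_n, q). -/

import Mathlib

open Complex

/-- The Gauss sum `τ(χ, q) = ∑_{j=0}^{n-1} χ(j) e(jq/n)` of a function `χ` regarded as a
character modulo `n`, at the integer `q`, where `e(z) = exp(2πiz)`. -/
noncomputable def tauChar (n : ℕ) (χ : ℕ → ℂ) (q : ℤ) : ℂ :=
  ∑ j ∈ Finset.range n, χ j * Complex.exp (2 * Real.pi * Complex.I * j * q / n)

/-- The quadratic character `χ_n = (·/n)` given by the Jacobi symbol, for odd positive `n`. -/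
noncomputable def chiJacobi (n : ℕ) : ℕ → ℂ := fun m => (jacobiSym m n : ℂ)

/-- The normalized Gauss sum
`G(χ_n, q) = ((1−i)/2 + (−1/n)·(1+i)/2)·τ(χ_n, q)` for odd positive `n`. -/
noncomputable def GJacobi (n : ℕ) (q : ℤ) : ℂ :=
  ((1 - Complex.I) / 2 + (jacobiSym (-1) n : ℂ) * (1 + Complex.I) / 2) * tauChar n (chiJacobi n) q

private lemma sum_range_eq_sum_zmod (k : ℕ) [NeZero k] (f : ℕ → ℂ) :
    ∑ j ∈ Finset.range k, f j = ∑ x : ZMod k, f x.val := by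
  refine Finset.sum_nbij' (fun j => (j : ZMod k)) (fun x => x.val) ?_ ?_ ?_ ?_ ?_
  · intro a _; exact Finset.mem_univ _
  · intro a _; exact Finset.mem_range.mpr (ZMod.val_lt a)
  · intro a ha; exact ZMod.val_natCast_of_lt (Finset.mem_range.mp ha)
  · intro a _; simp [ZMod.natCast_val, ZMod.cast_id]
  · intro a ha; rw [ZMod.val_natCast_of_lt (Finset.mem_range.mp ha)]

/-- periodicity of the exponential factor -/
private lemma exp_mod (k : ℕ) (hk : 0 < k) (q : ℤ) (t : ℕ) :
    Complex.exp (2 * Real.pi * Complex.I * (t % k : ℕ) * q / k) =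
      Complex.exp (2 * Real.pi * Complex.I * t * q / k) := by
  have hk0 : (k : ℂ) ≠ 0 := Nat.cast_ne_zero.mpr hk.ne'
  have gen : ∀ d r : ℕ, Complex.exp (2 * Real.pi * Complex.I * ((k * d + r : ℕ) : ℂ) * q / k) =
      Complex.exp (2 * Real.pi * Complex.I * (r : ℂ) * q / k) := by
    intro d r
    have : (2 * Real.pi * Complex.I * ((k * d + r : ℕ) : ℂ) * q / k : ℂ) =
        2 * Real.pi * Complex.I * (r : ℂ) * q / k
          + ((d * q : ℤ) : ℂ) * (2 * Real.pi * Complex.I) := by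
      push_cast; field_simp; ring
    rw [this, Complex.exp_add, Complex.exp_int_mul_two_pi_mul_I, mul_one]
  conv_rhs => rw [← Nat.div_add_mod t k]
  exact (gen (t / k) (t % k)).symm

/-- the generic term of the Gauss sum -/
private noncomputable def Fterm (k : ℕ) (q : ℤ) (t : ℕ) : ℂ :=
  chiJacobi k t * Complex.exp (2 * Real.pi * Complex.I * t * q / k)

private lemma tauChar_eq_sum_Fterm (k : ℕ) (q : ℤ) :
    tauChar k (chiJacobi k) q = ∑ j ∈ Finset.range k, Fterm k q j := rfl

private lemma tau_mul (m n : ℕ) (hm : 0 < m) (hn : 0 < n) (hcop : Nat.Coprime m n) (q : ℤ) :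
    tauChar (m * n) (chiJacobi (m * n)) q =
      ((jacobiSym n m : ℂ) * (jacobiSym m n : ℂ)) *
        (tauChar m (chiJacobi m) q * tauChar n (chiJacobi n) q) := by
  haveI : NeZero m := ⟨hm.ne'⟩
  haveI : NeZero n := ⟨hn.ne'⟩
  haveI : NeZero (m * n) := ⟨(Nat.mul_pos hm hn).ne'⟩
  have hm0 : (m : ℂ) ≠ 0 := Nat.cast_ne_zero.mpr hm.ne'
  have hn0 : (n : ℂ) ≠ 0 := Nat.cast_ne_zero.mpr hn.ne'
  set F : ℕ → ℂ := Fterm (m * n) q with hF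
  -- F is periodic mod m*n
  have hFper : ∀ t : ℕ, F (t % (m * n)) = F t := by
    intro t
    have h1 : chiJacobi (m * n) (t % (m * n)) = chiJacobi (m * n) t := by
      unfold chiJacobi
      congr 1
      exact_mod_cast jacobiSym.mod_left'
        (by rw [Int.natCast_mod, Int.emod_emod_of_dvd _ dvd_rfl])
    have h2 := exp_mod (m * n) (Nat.mul_pos hm hn) q t
    simp only [hF, Fterm]
    rw [h1, h2]
  -- the CRT bijection
  set g : ZMod m × ZMod n → ZMod (m * n) := fun p => ((p.1.val * n + p.2.val * m : ℕ) : ZMod (m * n)) with hg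
  have hginj : Function.Injective g := by
    intro p p' h
    have hmdvd : m ∣ m * n := dvd_mul_right m n
    have hndvd : n ∣ m * n := dvd_mul_left n m
    have hum : IsUnit (n : ZMod m) := (ZMod.isUnit_iff_coprime n m).mpr hcop.symm
    have hun : IsUnit (m : ZMod n) := (ZMod.isUnit_iff_coprime m n).mpr hcop
    have e1 : p.1 = p'.1 := by
      have := congrArg (ZMod.castHom hmdvd (ZMod m)) h
      simp only [hg, map_natCast] at this
      push_cast at this
      simp only [ZMod.natCast_self, mul_zero, add_zero, ZMod.natCast_val, ZMod.cast_id] at this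
      exact hum.mul_left_cancel (by simpa [mul_comm] using this)
    have e2 : p.2 = p'.2 := by
      have := congrArg (ZMod.castHom hndvd (ZMod n)) h
      simp only [hg, map_natCast] at this
      push_cast at this
      simp only [ZMod.natCast_self, mul_zero, zero_add, ZMod.natCast_val, ZMod.cast_id] at this
      exact hun.mul_left_cancel (by simpa [mul_comm] using this)
    exact Prod.ext e1 e2
  have hgbij : Function.Bijective g := by
    rw [Fintype.bijective_iff_injective_and_card]
    refine ⟨hginj, by simp [ZMod.card]⟩
  -- term identity
  have hterm : ∀ (a : ZMod m) (b : ZMod n),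
      F (a.val * n + b.val * m) =
        ((jacobiSym n m : ℂ) * (jacobiSym m n : ℂ)) *
          ((chiJacobi m a.val * Complex.exp (2 * Real.pi * Complex.I * a.val * q / m)) *
           (chiJacobi n b.val * Complex.exp (2 * Real.pi * Complex.I * b.val * q / n))) := by
    intro a b
    have hchi : chiJacobi (m * n) (a.val * n + b.val * m) =
        ((jacobiSym n m : ℂ) * (jacobiSym m n : ℂ)) *
          (chiJacobi m a.val * chiJacobi n b.val) := by
      unfold chiJacobi
      have hsplit : jacobiSym ((a.val * n + b.val * m : ℕ) : ℤ) (m * n) =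
          jacobiSym ((a.val * n + b.val * m : ℕ) : ℤ) m *
            jacobiSym ((a.val * n + b.val * m : ℕ) : ℤ) n := jacobiSym.mul_right _ m n
      have hma : jacobiSym ((a.val * n + b.val * m : ℕ) : ℤ) m =
          jacobiSym (a.val : ℤ) m * jacobiSym (n : ℤ) m := by
        have : jacobiSym ((a.val * n + b.val * m : ℕ) : ℤ) m =
            jacobiSym ((a.val : ℤ) * n) m := by
          apply jacobiSym.mod_left'
          push_cast
          rw [Int.add_mul_emod_self_right]
        rw [this, jacobiSym.mul_left]
      have hnb : jacobiSym ((a.val * n + b.val * m : ℕ) : ℤ) n =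
          jacobiSym (b.val : ℤ) n * jacobiSym (m : ℤ) n := by
        have : jacobiSym ((a.val * n + b.val * m : ℕ) : ℤ) n =
            jacobiSym ((b.val : ℤ) * m) n := by
          apply jacobiSym.mod_left'
          push_cast
          rw [add_comm, Int.add_mul_emod_self_right]
        rw [this, jacobiSym.mul_left]
      rw [hsplit, hma, hnb]
      push_cast
      ring
    have hexp : Complex.exp (2 * Real.pi * Complex.I * ((a.val * n + b.val * m : ℕ) : ℂ) * q / (m * n)) =
        Complex.exp (2 * Real.pi * Complex.I * a.val * q / m) *
          Complex.exp (2 * Real.pi * Complex.I * b.val * q / n) := by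
      rw [← Complex.exp_add]
      congr 1
      push_cast
      field_simp
    simp only [hF, Fterm]
    push_cast
    push_cast at hchi hexp
    rw [hchi, hexp]
    ring
  -- put it together
  have key : tauChar (m * n) (chiJacobi (m * n)) q = ∑ p : ZMod m × ZMod n, F (g p).val := by
    rw [hF, tauChar_eq_sum_Fterm, sum_range_eq_sum_zmod]
    exact (Fintype.sum_bijective g hgbij _ _ (fun p => rfl)).symm
  rw [key]
  have : ∀ p : ZMod m × ZMod n, F (g p).val =
      ((jacobiSym n m : ℂ) * (jacobiSym m n : ℂ)) *
        ((chiJacobi m p.1.val * Complex.exp (2 * Real.pi * Complex.I * p.1.val * q / m)) *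
         (chiJacobi n p.2.val * Complex.exp (2 * Real.pi * Complex.I * p.2.val * q / n))) := by
    intro p
    rw [show (g p).val = (p.1.val * n + p.2.val * m) % (m * n) from ZMod.val_natCast _ _,
      hFper, hterm]
  rw [Finset.sum_congr rfl (fun p _ => this p), ← Finset.mul_sum]
  congr 1
  rw [tauChar_eq_sum_Fterm, tauChar_eq_sum_Fterm,
    sum_range_eq_sum_zmod, sum_range_eq_sum_zmod, Fintype.sum_mul_sum]
  rw [Fintype.sum_prod_type]
  simp [Fterm, Finset.mul_sum]

theorem GJacobi_mul (m n : ℕ) (hm : 0 < m) (hn : 0 < n) (hmodd : Odd m) (hnodd : Odd n)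
    (hcop : Nat.Coprime m n) (q : ℤ) :
    GJacobi (m * n) q = GJacobi m q * GJacobi n q := by
  haveI : NeZero m := ⟨hm.ne'⟩
  haveI : NeZero n := ⟨hn.ne'⟩
  have hJm : (jacobiSym (-1) m : ℤ) = (-1) ^ (m / 2) := by
    rw [jacobiSym.at_neg_one hmodd, ZMod.χ₄_eq_neg_one_pow (Nat.odd_iff.mp hmodd)]
  have hJn : (jacobiSym (-1) n : ℤ) = (-1) ^ (n / 2) := by
    rw [jacobiSym.at_neg_one hnodd, ZMod.χ₄_eq_neg_one_pow (Nat.odd_iff.mp hnodd)]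
  have hJmn : (jacobiSym (-1) (m * n) : ℤ) = (-1) ^ (m / 2) * (-1) ^ (n / 2) := by
    rw [jacobiSym.mul_right, hJm, hJn]
  have hsq : jacobiSym (n : ℤ) m ^ 2 = 1 := by
    apply jacobiSym.sq_one
    rw [Int.gcd_natCast_natCast]
    exact hcop.symm
  have hrecip : (jacobiSym (m : ℤ) n) * (jacobiSym (n : ℤ) m) = (-1) ^ (m / 2 * (n / 2)) := by
    rw [jacobiSym.quadratic_reciprocity hmodd hnodd, mul_assoc, ← sq, hsq, mul_one]
  unfold GJacobi
  rw [tau_mul m n hm hn hcop q]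
  have halg : ((1 - Complex.I) / 2 + (jacobiSym (-1) (m * n) : ℂ) * (1 + Complex.I) / 2) *
        ((jacobiSym n m : ℂ) * (jacobiSym m n : ℂ)) =
      ((1 - Complex.I) / 2 + (jacobiSym (-1) m : ℂ) * (1 + Complex.I) / 2) *
        ((1 - Complex.I) / 2 + (jacobiSym (-1) n : ℂ) * (1 + Complex.I) / 2) := by
    have hC : ((jacobiSym n m : ℤ) * (jacobiSym m n : ℤ) : ℂ) = ((-1 : ℂ)) ^ (m / 2 * (n / 2)) := by
      rw [mul_comm]
      exact_mod_cast congrArg (Int.cast : ℤ → ℂ) hrecip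
    have h1 : ((jacobiSym (-1) m : ℤ) : ℂ) = (-1 : ℂ) ^ (m / 2) := by
      exact_mod_cast congrArg (Int.cast : ℤ → ℂ) hJm
    have h2 : ((jacobiSym (-1) n : ℤ) : ℂ) = (-1 : ℂ) ^ (n / 2) := by
      exact_mod_cast congrArg (Int.cast : ℤ → ℂ) hJn
    have h3 : ((jacobiSym (-1) (m * n) : ℤ) : ℂ) = (-1 : ℂ) ^ (m / 2) * (-1 : ℂ) ^ (n / 2) := by
      exact_mod_cast congrArg (Int.cast : ℤ → ℂ) hJmn
    push_cast at hC h1 h2 h3 ⊢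
    rw [h1, h2, h3, hC]
    rcases Nat.even_or_odd (m / 2) with he | he <;>
      rcases Nat.even_or_odd (n / 2) with hf | hf
    · simp only [he.neg_one_pow, hf.neg_one_pow, (he.mul_right (n / 2)).neg_one_pow, one_mul,
        mul_one]
      ring_nf
    · simp only [he.neg_one_pow, hf.neg_one_pow, (he.mul_right (n / 2)).neg_one_pow, one_mul,
        mul_one]
      ring_nf
    · simp only [he.neg_one_pow, hf.neg_one_pow,
        (Nat.even_mul.mpr (Or.inr hf)).neg_one_pow, one_mul, mul_one]
      ring_nf
    · have h4 : Odd (m / 2 * (n / 2)) := he.mul hf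
      simp only [he.neg_one_pow, hf.neg_one_pow, h4.neg_one_pow]
      ring_nf
      simp [Complex.I_sq]
  calc ((1 - Complex.I) / 2 + (jacobiSym (-1) (m * n) : ℂ) * (1 + Complex.I) / 2) *
        (((jacobiSym n m : ℂ) * (jacobiSym m n : ℂ)) *
          (tauChar m (chiJacobi m) q * tauChar n (chiJacobi n) q))
      = (((1 - Complex.I) / 2 + (jacobiSym (-1) (m * n) : ℂ) * (1 + Complex.I) / 2) *
          ((jacobiSym n m : ℂ) * (jacobiSym m n : ℂ))) *
          (tauChar m (chiJacobi m) q * tauChar n (chiJacobi n) q) := by ring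
    _ = _ := by rw [halg]; ring
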